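/- arXiv:0810.3381 — 2 statements merged into one kernel-verified Lean document; each statement's English description precedes it below -/
import Mathlib

section
/- Let d ≥ 1 and let G be a finite subgroup of the unitary group U(d) of d×d complex unitary matrices, acting irreducibly on ℂ^d (i.e., the only subspaces of ℂ^d invariant under every U ∈ G are {0} and ℂ^d). Then (d/|G|)·Σ_{U∈G} |vec U⟩⟨vec U| = I on ℂ^d ⊗ ℂ^d, where vec U := Σ_{k,l} U_{k,l}·(e_k ⊗ e_l). Equivalently, the family {(d²/|G|)·|(1/√d)·vec U⟩⟨(1/√d)·vec U|}_{U∈G} is a POVM (its elements are positive semidefinite and sum to the identity). -/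
open scoped BigOperators ComplexInnerProductSpace
open Matrix MeasureTheory

noncomputable section

/-- `ℂ^d` with the standard Hermitian inner product. -/
abbrev V (d : ℕ) : Type := EuclideanSpace ℂ (Fin d)

/-- `ℂ^d ⊗ ℂ^d`, identified with functions on `Fin d × Fin d`. -/
abbrev V2 (d : ℕ) : Type := EuclideanSpace ℂ (Fin d × Fin d)

/-- operators on `ℂ^d ⊗ ℂ^d`, as matrices. -/
abbrev Op2 (d : ℕ) : Type := Matrix (Fin d × Fin d) (Fin d × Fin d) ℂ

/-- tensor (Kronecker) product of vectors. -/
def tens {d : ℕ} (u v : V d) : V2 d := WithLp.toLp 2 fun p => u p.1 * v p.2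

/-- entrywise complex conjugate `ū` of a vector. -/
def cvec {d : ℕ} (u : V d) : V d := WithLp.toLp 2 fun k => starRingEnd ℂ (u k)

/-- the maximally entangled state `φ⁰ = (1/√d) Σ_k e_k ⊗ e_k`. -/
def phi0 (d : ℕ) : V2 d := WithLp.toLp 2 fun p => if p.1 = p.2 then ((Real.sqrt d : ℂ))⁻¹ else 0

/-- the rank-one operator `|w⟩⟨w|`. -/
def outer {d : ℕ} (w : V2 d) : Op2 d := Matrix.of fun p q => w p * starRingEnd ℂ (w q)

/-- `T_inv = |φ⁰⟩⟨φ⁰| + (1/(d+1))(I - |φ⁰⟩⟨φ⁰|)`. -/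
def Tinv (d : ℕ) : Op2 d := outer (phi0 d) + (1 / ((d : ℂ) + 1)) • (1 - outer (phi0 d))


/-- `vec U = Σ_{k,l} U_{k,l} e_k ⊗ e_l`. -/
def vecM {d : ℕ} (U : Matrix (Fin d) (Fin d) ℂ) : V2 d := WithLp.toLp 2 fun p => U p.1 p.2

lemma schur_aux {d : ℕ} (hd : 1 ≤ d) (G : Subgroup (Matrix.unitaryGroup (Fin d) ℂ))
    (hirr : ∀ W : Submodule ℂ (V d),
      (∀ U ∈ G, ∀ w ∈ W,
        WithLp.toLp 2 (((U : Matrix.unitaryGroup (Fin d) ℂ) : Matrix (Fin d) (Fin d) ℂ).mulVec w) ∈ W) →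
      W = ⊥ ∨ W = ⊤)
    (T : Matrix (Fin d) (Fin d) ℂ)
    (hT : ∀ U ∈ G, ((U : Matrix (Fin d) (Fin d) ℂ)) * T
        = T * ((U : Matrix (Fin d) (Fin d) ℂ))) :
    ∃ c : ℂ, T = c • (1 : Matrix (Fin d) (Fin d) ℂ) := by
  haveI : Nonempty (Fin d) := ⟨⟨0, hd⟩⟩
  haveI : Nontrivial (V d) := inferInstance
  obtain ⟨lam, hlam⟩ := Module.End.exists_eigenvalue (Matrix.toEuclideanLin T)
  set W := Module.End.eigenspace (Matrix.toEuclideanLin T) lam with hW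
  have hmem : ∀ w : V d, w ∈ W ↔ T.mulVec w = lam • w := by
    intro w
    rw [hW, Module.End.mem_eigenspace_iff]
    constructor <;> intro h
    · exact congrArg WithLp.ofLp h
    · exact congrArg (WithLp.toLp 2) h
  have hinv : ∀ U ∈ G, ∀ w ∈ W,
      WithLp.toLp 2 (((U : Matrix.unitaryGroup (Fin d) ℂ) : Matrix (Fin d) (Fin d) ℂ).mulVec w) ∈ W := by
    intro U hU w hw
    rw [hmem] at hw ⊢
    simp only [WithLp.ofLp_toLp]
    rw [Matrix.mulVec_mulVec, ← hT U hU, ← Matrix.mulVec_mulVec, hw, Matrix.mulVec_smul]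
  rcases hirr W hinv with hbot | htop
  · exact absurd hbot hlam
  · have hall : ∀ w : Fin d → ℂ, T.mulVec w = lam • w := by
      intro w
      have := (hmem (WithLp.toLp 2 w)).mp (htop ▸ Submodule.mem_top)
      exact this
    refine ⟨lam, ?_⟩
    ext i j
    have := congrFun (hall (Pi.single j 1)) i
    simpa [Matrix.mulVec_single, Matrix.one_apply, Pi.single_apply] using this

/-- For a finite subgroup `G` of the unitary group acting irreducibly on `ℂ^d`,
`(d/|G|) Σ_{U∈G} |vec U⟩⟨vec U| = I`, i.e. the rescaled family is a POVM. -/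
theorem stmt12 (d : ℕ) (hd : 1 ≤ d) (G : Subgroup (Matrix.unitaryGroup (Fin d) ℂ))
    [Fintype G]
    (hirr : ∀ W : Submodule ℂ (V d),
      (∀ U ∈ G, ∀ w ∈ W,
        WithLp.toLp 2 (((U : Matrix.unitaryGroup (Fin d) ℂ) : Matrix (Fin d) (Fin d) ℂ).mulVec w) ∈ W) →
      W = ⊥ ∨ W = ⊤) :
    ((d : ℂ) / (Fintype.card G : ℂ)) •
        ∑ U : G, outer (vecM ((U : Matrix.unitaryGroup (Fin d) ℂ) : Matrix (Fin d) (Fin d) ℂ))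
      = (1 : Op2 d) := by
  classical
  have hdC : (d : ℂ) ≠ 0 := Nat.cast_ne_zero.mpr (by omega)
  have hNC : ((Fintype.card G : ℕ) : ℂ) ≠ 0 := Nat.cast_ne_zero.mpr Fintype.card_ne_zero
  -- the averaged operator for fixed l n
  set cM : G → Matrix (Fin d) (Fin d) ℂ :=
    fun U => ((U : Matrix.unitaryGroup (Fin d) ℂ) : Matrix (Fin d) (Fin d) ℂ) with hcM
  have key : ∀ l n : Fin d, ∀ k m : Fin d,
      (∑ U : G, (cM U) k l * starRingEnd ℂ ((cM U) m n))
        = (Fintype.card G : ℂ) / d * (if l = n then 1 else 0) * (if k = m then 1 else 0) := by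
    intro l n k m
    set A : Matrix (Fin d) (Fin d) ℂ := Matrix.single l n 1 with hA
    set T : Matrix (Fin d) (Fin d) ℂ := ∑ U : G, cM U * A * star (cM U) with hTdef
    -- commutation
    have hcomm : ∀ Vu ∈ G, ((Vu : Matrix (Fin d) (Fin d) ℂ)) * T
        = T * ((Vu : Matrix (Fin d) (Fin d) ℂ)) := by
      intro Vu hVu
      set v : G := ⟨Vu, hVu⟩ with hv
      have hVc : (Vu : Matrix (Fin d) (Fin d) ℂ) = cM v := rfl
      rw [hTdef, Finset.mul_sum, Finset.sum_mul]
      have hre : ∑ U : G, cM U * A * star (cM U) * (Vu : Matrix (Fin d) (Fin d) ℂ)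
          = ∑ U : G, cM (v * U) * A * star (cM (v * U)) * (Vu : Matrix (Fin d) (Fin d) ℂ) :=
        (Fintype.sum_equiv (Equiv.mulLeft v) _ _ (fun U => rfl)).symm
      rw [hre]
      refine Finset.sum_congr rfl fun U _ => ?_
      have hmul : cM (v * U) = (Vu : Matrix (Fin d) (Fin d) ℂ) * cM U := by
        simp [hcM, hv]
      have hunit : star (Vu : Matrix (Fin d) (Fin d) ℂ) * (Vu : Matrix (Fin d) (Fin d) ℂ) = 1 :=
        Matrix.UnitaryGroup.star_mul_self Vu
      rw [hmul]
      simp only [Matrix.star_mul, mul_assoc, hunit, mul_one]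
    obtain ⟨c, hc⟩ := schur_aux hd G hirr T hcomm
    -- trace computation
    have htr : T.trace = (Fintype.card G : ℂ) * (if l = n then 1 else 0) := by
      rw [hTdef, Matrix.trace_sum]
      have : ∀ U : G, (cM U * A * star (cM U)).trace = (if l = n then 1 else 0) := by
        intro U
        have hu : star (cM U) * cM U = 1 := Matrix.UnitaryGroup.star_mul_self _
        rw [Matrix.trace_mul_cycle, hu, one_mul]
        by_cases h : l = n
        · subst h; simp [hA]
        · simp [hA, Matrix.trace_single_eq_of_ne l n (1:ℂ) h, h]
      simp [this, Finset.sum_const, Finset.card_univ]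
    have htr2 : T.trace = c * d := by
      rw [hc, Matrix.trace_smul, Matrix.trace_one]
      simp [smul_eq_mul]
    have hceq : c = (Fintype.card G : ℂ) / d * (if l = n then 1 else 0) := by
      rw [div_mul_eq_mul_div, eq_div_iff hdC, ← htr2, htr]
    -- entry computation
    have hentry : ∀ U : G, (cM U * A * star (cM U)) k m
        = (cM U) k l * starRingEnd ℂ ((cM U) m n) := by
      intro U
      rw [Matrix.mul_apply]
      rw [Finset.sum_eq_single n]
      · rw [hA, Matrix.mul_single_apply_same, mul_one, Matrix.star_apply,
          starRingEnd_apply]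
      · intro b _ hb
        simp [hA, hb]
      · simp
    have hTkm : T k m = ∑ U : G, (cM U) k l * starRingEnd ℂ ((cM U) m n) := by
      rw [hTdef, Matrix.sum_apply]
      exact Finset.sum_congr rfl fun U _ => hentry U
    rw [← hTkm, hc]
    rw [hceq]
    by_cases h : k = m
    · subst h; simp [Matrix.one_apply]
    · simp [Matrix.one_apply, h]
  -- assemble
  ext ⟨k, l⟩ ⟨m, n⟩
  rw [Matrix.smul_apply, Matrix.sum_apply]
  have : ∑ U : G, outer (vecM (cM U)) (k, l) (m, n)
      = ∑ U : G, (cM U) k l * starRingEnd ℂ ((cM U) m n) := Finset.sum_congr rfl fun U _ => rfl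
  rw [this, key l n k m]
  rw [Matrix.one_apply]
  by_cases h1 : k = m <;> by_cases h2 : l = n <;>
    simp [h1, h2, Prod.ext_iff, smul_eq_mul] <;> field_simp
end
end

section
/- Let d ≥ 2 and let G be a finite subgroup of the unitary group U(d) such that (1) G acts irreducibly on ℂ^d (the only subspaces of ℂ^d invariant under every U ∈ G are {0} and ℂ^d), and (2) the orthogonal complement of φ⁰ in ℂ^d ⊗ ℂ^d is irreducible under the action v ↦ (U ⊗ Ū)v, U ∈ G (every subspace of the orthocomplement of φ⁰ invariant under all U ⊗ Ū, U ∈ G, is {0} or the whole orthocomplement). Define T(M_f) := (d²/|G|)·Σ_{U∈G} |w_U⟩⟨w_U| on H_{A₁} ⊗ H_{A₂} ⊗ H_{B₁} ⊗ H_{B₂} (each factor ℂ^d), where w_U := (1/√d)·vec U ⊗ (1/√d)·vec Ū lives in (H_{A₁} ⊗ H_{A₂}) ⊗ (H_{B₁} ⊗ H_{B₂}). Then T(M_f) = S·( |φ⁰⟩⟨φ⁰| ⊗ |φ⁰⟩⟨φ⁰| + (1/(d²−1))·(I − |φ⁰⟩⟨φ⁰|) ⊗ (I − |φ⁰⟩⟨φ⁰|)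 )·S⁻¹, where the right-hand operator is written on (H_{A₁} ⊗ H_{B₁}) ⊗ (H_{A₂} ⊗ H_{B₂}) and S is the unitary permutation of tensor factors swapping the second and third factors (so that pairing (A₁,B₁),(A₂,B₂) is carried to the ordering A₁,A₂,B₁,B₂). -/
open scoped BigOperators ComplexInnerProductSpace
open Matrix MeasureTheory

noncomputable section

/-- four-fold index set for `ℂ^d ⊗ ℂ^d ⊗ ℂ^d ⊗ ℂ^d`. -/
abbrev I4 (d : ℕ) : Type := Fin d × Fin d × Fin d × Fin d

/-- `ℂ^d ⊗ ℂ^d ⊗ ℂ^d ⊗ ℂ^d`. -/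
abbrev V4 (d : ℕ) : Type := I4 d → ℂ

/-- operators on the four-fold tensor product, as matrices. -/
abbrev Op4 (d : ℕ) : Type := Matrix (I4 d) (I4 d) ℂ

/-- the rank-one operator `|w⟩⟨w|` on the four-fold tensor product. -/
def outer4 {d : ℕ} (w : V4 d) : Op4 d := Matrix.of fun p q => w p * starRingEnd ℂ (w q)

/-- entrywise complex conjugate `Ū` of a matrix. -/
def mconj {d : ℕ} (U : Matrix (Fin d) (Fin d) ℂ) : Matrix (Fin d) (Fin d) ℂ :=
  U.map (starRingEnd ℂ)

/-- `w_U = ((1/√d) vec U) ⊗ ((1/√d) vec Ū)` on the factors `A₁, A₂, B₁, B₂`. -/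
def wU {d : ℕ} (U : Matrix (Fin d) (Fin d) ℂ) : V4 d := fun p =>
  (((Real.sqrt d : ℂ))⁻¹ * U p.1 p.2.1) *
    (((Real.sqrt d : ℂ))⁻¹ * starRingEnd ℂ (U p.2.2.1 p.2.2.2))

/-- the test `T(M_f) = (d²/|G|) Σ_{U ∈ G} |w_U⟩⟨w_U|`. -/
def TMf (d : ℕ) (G : Subgroup (Matrix.unitaryGroup (Fin d) ℂ)) [Fintype G] : Op4 d :=
  (((d : ℂ) ^ 2) / (Fintype.card G : ℂ)) •
    ∑ U : G, outer4 (wU ((U : Matrix.unitaryGroup (Fin d) ℂ) : Matrix (Fin d) (Fin d) ℂ))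

/-- `A ⊗ B` for operators on `ℂ^d`, acting on `ℂ^d ⊗ ℂ^d`. -/
def tensM {d : ℕ} (A B : Matrix (Fin d) (Fin d) ℂ) : Op2 d :=
  Matrix.of fun p q => A p.1 q.1 * B p.2 q.2

/-- `M ⊗ N` for two operators on `ℂ^d ⊗ ℂ^d`, placed on the factor pairs
`(1,2)` and `(3,4)` of the four-fold tensor product. -/
def tens22 {d : ℕ} (M N : Op2 d) : Op4 d :=
  Matrix.of fun p q =>
    M (p.1, p.2.1) (q.1, q.2.1) * N (p.2.2.1, p.2.2.2) (q.2.2.1, q.2.2.2)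

/-- the unitary permutation of tensor factors swapping the second and third
factors. -/
def swap23 (d : ℕ) : Op4 d :=
  Matrix.of fun p q =>
    if p.1 = q.1 ∧ p.2.1 = q.2.2.1 ∧ p.2.2.1 = q.2.1 ∧ p.2.2.2 = q.2.2.2 then 1 else 0

namespace Aux14

variable {d : ℕ}

/-- the representation `U ↦ U ⊗ Ū`. -/
def rho (U : Matrix (Fin d) (Fin d) ℂ) : Op2 d := tensM U (mconj U)



/-- the representation `U ↦ U ⊗ Ū`. -/

lemma tensM_mul (A B C D : Matrix (Fin d) (Fin d) ℂ) :
    tensM A B * tensM C D = tensM (A * C) (B * D) := by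
  ext p q
  simp only [tensM, Matrix.mul_apply, Matrix.of_apply, Fintype.sum_prod_type]
  rw [Finset.sum_mul_sum]
  congr 1; ext r1; congr 1; ext r2; ring

lemma tensM_one : tensM (1 : Matrix (Fin d) (Fin d) ℂ) 1 = 1 := by
  ext p q
  simp only [tensM, Matrix.of_apply, Matrix.one_apply, Prod.ext_iff]
  by_cases h1 : p.1 = q.1 <;> by_cases h2 : p.2 = q.2 <;> simp [h1, h2]

lemma tensM_conjTranspose (A B : Matrix (Fin d) (Fin d) ℂ) :
    (tensM A B)ᴴ = tensM Aᴴ Bᴴ := by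
  ext p q
  simp [tensM, Matrix.conjTranspose_apply]

lemma mconj_mul (A B : Matrix (Fin d) (Fin d) ℂ) :
    mconj (A * B) = mconj A * mconj B := Matrix.map_mul

lemma mconj_one : mconj (1 : Matrix (Fin d) (Fin d) ℂ) = 1 := by
  ext i j; simp [mconj, Matrix.one_apply, apply_ite]

lemma mconj_conjTranspose (A : Matrix (Fin d) (Fin d) ℂ) : mconj Aᴴ = Aᵀ := by
  ext i j; simp [mconj, Matrix.conjTranspose_apply]

lemma conjTranspose_mconj (A : Matrix (Fin d) (Fin d) ℂ) : (mconj A)ᴴ = Aᵀ := by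
  ext i j; simp [mconj, Matrix.conjTranspose_apply]

lemma rho_mul (A B : Matrix (Fin d) (Fin d) ℂ) : rho A * rho B = rho (A * B) := by
  rw [rho, rho, tensM_mul, ← mconj_mul]; rfl

lemma rho_conjTranspose (A : Matrix (Fin d) (Fin d) ℂ) : (rho A)ᴴ = rho Aᴴ := by
  rw [rho, tensM_conjTranspose, conjTranspose_mconj, rho, mconj_conjTranspose]

lemma rho_one : rho (1 : Matrix (Fin d) (Fin d) ℂ) = 1 := by
  rw [rho, mconj_one, tensM_one]

lemma rho_mul_conjTranspose_self {U : Matrix (Fin d) (Fin d) ℂ}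
    (hU : U * Uᴴ = 1) : rho U * (rho U)ᴴ = 1 := by
  rw [rho_conjTranspose, rho_mul, hU, rho_one]

lemma rho_conjTranspose_mul_self {U : Matrix (Fin d) (Fin d) ℂ}
    (hU : Uᴴ * U = 1) : (rho U)ᴴ * rho U = 1 := by
  rw [rho_conjTranspose, rho_mul, hU, rho_one]




lemma conj_phi0 (p : Fin d × Fin d) : starRingEnd ℂ (phi0 d p) = phi0 d p := by
  simp only [phi0]
  split
  · rw [← Complex.ofReal_inv]; exact Complex.conj_ofReal _
  · exact map_zero _

lemma sqrtinv_mul_self (hd : 0 < d) :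
    ((Real.sqrt d : ℂ))⁻¹ * ((Real.sqrt d : ℂ))⁻¹ = ((d : ℂ))⁻¹ := by
  rw [← mul_inv, ← Complex.ofReal_mul, Real.mul_self_sqrt (Nat.cast_nonneg d)]
  norm_num

lemma starphi_dot_phi (hd : 0 < d) :
    star (phi0 d) ⬝ᵥ (phi0 d : (Fin d × Fin d) → ℂ) = 1 := by
  simp only [dotProduct, Pi.star_apply, RCLike.star_def, conj_phi0]
  have : ∀ p : Fin d × Fin d, phi0 d p * phi0 d p =
      if p.1 = p.2 then ((d : ℂ))⁻¹ else 0 := by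
    intro p; simp only [phi0]; split
    · exact sqrtinv_mul_self hd
    · ring
  simp only [this, Fintype.sum_prod_type, Finset.sum_ite_eq, Finset.mem_univ, if_true]
  simp only [Finset.sum_const, Finset.card_univ, Fintype.card_fin, nsmul_eq_mul]
  have : (d:ℂ) ≠ 0 := Nat.cast_ne_zero.mpr hd.ne'
  field_simp

lemma outer_apply (w : V2 d) (p q) : outer w p q = w p * starRingEnd ℂ (w q) := rfl

lemma P_symm (p q) : outer (phi0 d) p q = outer (phi0 d) q p := by
  simp only [outer_apply, conj_phi0]; ring

lemma P_conjTranspose : (outer (phi0 d))ᴴ = outer (phi0 d) := by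
  ext p q
  rw [Matrix.conjTranspose_apply, outer_apply, outer_apply]
  simp only [star_mul', RCLike.star_def, Complex.conj_conj, conj_phi0]
  ring

lemma P_mulVec (x : (Fin d × Fin d) → ℂ) :
    (outer (phi0 d)) *ᵥ x = (star (phi0 d) ⬝ᵥ x) • (phi0 d : (Fin d × Fin d) → ℂ) := by
  funext p
  simp only [Matrix.mulVec, dotProduct, outer_apply, Pi.smul_apply, smul_eq_mul,
    Pi.star_apply, RCLike.star_def]
  rw [Finset.sum_mul]
  congr 1; funext r; ring

lemma P_mul_P (hd : 0 < d) : outer (phi0 d) * outer (phi0 d) = outer (phi0 d) := by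
  ext p q
  simp only [Matrix.mul_apply, outer_apply]
  have : ∀ r, phi0 d p * starRingEnd ℂ (phi0 d r) * (phi0 d r * starRingEnd ℂ (phi0 d q)) =
      (phi0 d p * starRingEnd ℂ (phi0 d q)) * (starRingEnd ℂ (phi0 d r) * phi0 d r) := by
    intro r; ring
  simp only [this, ← Finset.mul_sum]
  have h2 := starphi_dot_phi (d := d) hd
  simp only [dotProduct, Pi.star_apply, RCLike.star_def] at h2
  rw [h2, mul_one]

lemma trace_P (hd : 0 < d) : (outer (phi0 d)).trace = 1 := by
  have h2 := starphi_dot_phi (d := d) hd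
  simp only [dotProduct, Pi.star_apply, RCLike.star_def] at h2
  rw [Matrix.trace]
  simp only [Matrix.diag_apply, outer_apply]
  rw [← h2]; congr 1; funext p; ring




lemma rho_mulVec_phi0 {U : Matrix (Fin d) (Fin d) ℂ} (hU : U * Uᴴ = 1) :
    rho U *ᵥ (phi0 d : (Fin d × Fin d) → ℂ) = phi0 d := by
  funext p
  have h1 : ∀ k l : Fin d, (U * Uᴴ) k l = if k = l then 1 else 0 := by
    intro k l; rw [hU, Matrix.one_apply]
  have h2 := h1 p.1 p.2
  rw [Matrix.mul_apply] at h2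
  simp only [Matrix.mulVec, dotProduct, rho, tensM, mconj, Matrix.of_apply,
    Matrix.map_apply, phi0, Fintype.sum_prod_type, mul_ite, mul_zero,
    Finset.sum_ite_eq, Finset.mem_univ, if_true]
  rw [show ∀ f : Fin d → ℂ, ∑ x, f x * ((Real.sqrt d : ℂ))⁻¹
      = (∑ x, f x) * ((Real.sqrt d : ℂ))⁻¹ from fun f => (Finset.sum_mul ..).symm]
  rw [show (∑ x, U p.1 x * starRingEnd ℂ (U p.2 x)) = (if p.1 = p.2 then 1 else 0) from by
    rw [← h2]
    exact Finset.sum_congr rfl fun j _ => by rw [Matrix.conjTranspose_apply]; rfl]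
  split <;> simp

lemma rho_mul_P {U : Matrix (Fin d) (Fin d) ℂ} (hU : U * Uᴴ = 1) :
    rho U * outer (phi0 d) = outer (phi0 d) := by
  ext p q
  rw [Matrix.mul_apply]
  have := congrFun (rho_mulVec_phi0 hU) p
  rw [Matrix.mulVec, dotProduct] at this
  calc ∑ r, rho U p r * outer (phi0 d) r q
      = (∑ r, rho U p r * phi0 d r) * starRingEnd ℂ (phi0 d q) := by
        rw [Finset.sum_mul]; congr 1; funext r; rw [outer]; simp only [Matrix.of_apply]; ring
    _ = outer (phi0 d) p q := by rw [this]; rfl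

lemma P_mul_rho {U : Matrix (Fin d) (Fin d) ℂ} (hU : Uᴴ * U = 1) :
    outer (phi0 d) * rho U = outer (phi0 d) := by
  have h : Uᴴ * (Uᴴ)ᴴ = 1 := by rwa [Matrix.conjTranspose_conjTranspose]
  have := rho_mul_P (d := d) h
  calc outer (phi0 d) * rho U = ((rho U)ᴴ * (outer (phi0 d))ᴴ)ᴴ := by
        rw [← Matrix.conjTranspose_mul, Matrix.conjTranspose_conjTranspose]
    _ = outer (phi0 d) := by
        rw [rho_conjTranspose, P_conjTranspose, this, P_conjTranspose]

lemma rho_conjT_mulVec_phi0 {U : Matrix (Fin d) (Fin d) ℂ} (hU : Uᴴ * U = 1) :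
    (rho U)ᴴ *ᵥ (phi0 d : (Fin d × Fin d) → ℂ) = phi0 d := by
  rw [rho_conjTranspose]
  exact rho_mulVec_phi0 (by rwa [Matrix.conjTranspose_conjTranspose])

/-- the orthogonal complement of `φ⁰`, concretely. -/
lemma vecMul_starphi (M : Op2 d)
    (h : Mᴴ *ᵥ (phi0 d : (Fin d × Fin d) → ℂ) = phi0 d) :
    (star (phi0 d) ᵥ* M : (Fin d × Fin d) → ℂ) = (star (phi0 d) : (Fin d × Fin d) → ℂ) := by
  have h2 := congrArg (star : ((Fin d × Fin d) → ℂ) → ((Fin d × Fin d) → ℂ)) h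
  rwa [Matrix.star_mulVec, Matrix.conjTranspose_conjTranspose] at h2

lemma mem_orthophi_iff (w : V2 d) :
    w ∈ (ℂ ∙ phi0 d)ᗮ ↔ star (phi0 d) ⬝ᵥ (w : (Fin d × Fin d) → ℂ) = 0 := by
  rw [Submodule.mem_orthogonal_singleton_iff_inner_right]
  constructor <;> intro h <;> [rw [← h]; rw [← h]] <;>
    simp [PiLp.inner_apply, RCLike.inner_apply, dotProduct, mul_comm]

lemma rho_mulVec_mem_orthophi {U : Matrix (Fin d) (Fin d) ℂ} (hU : Uᴴ * U = 1)
    {w : V2 d} (hw : w ∈ (ℂ ∙ phi0 d)ᗮ) :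
    (WithLp.toLp 2 (rho U *ᵥ (w : (Fin d × Fin d) → ℂ)) : V2 d) ∈ (ℂ ∙ phi0 d)ᗮ := by
  rw [mem_orthophi_iff] at hw ⊢
  rw [dotProduct_mulVec, vecMul_starphi _ (rho_conjT_mulVec_phi0 hU), hw]

lemma Q_mulVec_mem_orthophi (hd : 0 < d) (x : (Fin d × Fin d) → ℂ) :
    (WithLp.toLp 2 ((1 - outer (phi0 d)) *ᵥ x : (Fin d × Fin d) → ℂ) : V2 d) ∈ (ℂ ∙ phi0 d)ᗮ := by
  rw [mem_orthophi_iff, Matrix.sub_mulVec, Matrix.one_mulVec, dotProduct_sub]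
  have hP : outer (phi0 d) *ᵥ (phi0 d : (Fin d × Fin d) → ℂ) = phi0 d := by
    funext p
    rw [Matrix.mulVec, dotProduct]
    have h2 := starphi_dot_phi hd
    rw [dotProduct] at h2
    calc ∑ r, outer (phi0 d) p r * phi0 d r
        = phi0 d p * ∑ r, (star (phi0 d) : (Fin d × Fin d) → ℂ) r * phi0 d r := by
          rw [Finset.mul_sum]
          refine Finset.sum_congr rfl fun r _ => ?_
          rw [outer]
          simp only [Matrix.of_apply, Pi.star_apply, RCLike.star_def]; ring
      _ = phi0 d p := by rw [h2, mul_one]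
  rw [dotProduct_mulVec, vecMul_starphi _ (by rw [P_conjTranspose]; exact hP), sub_self]

lemma phi0_ne_zero (hd : 0 < d) : phi0 d ≠ 0 := by
  intro h
  have h0 : phi0 d (⟨0, hd⟩, ⟨0, hd⟩) = 0 := by rw [h]; rfl
  have h1 : ((Real.sqrt d : ℂ))⁻¹ = 0 := by rw [← h0]; rfl
  rw [inv_eq_zero, Complex.ofReal_eq_zero] at h1
  exact (Real.sqrt_ne_zero'.mpr (by exact_mod_cast hd)) h1

lemma finrank_orthophi (hd : 0 < d) :
    Module.finrank ℂ ((ℂ ∙ phi0 d)ᗮ : Submodule ℂ (V2 d)) = d * d - 1 := by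
  have h1 : Module.finrank ℂ (ℂ ∙ phi0 d : Submodule ℂ (V2 d)) = 1 :=
    finrank_span_singleton (phi0_ne_zero hd)
  have h2 := Submodule.finrank_add_finrank_orthogonal (K := (ℂ ∙ phi0 d : Submodule ℂ (V2 d)))
  rw [h1] at h2
  have h3 : Module.finrank ℂ (V2 d) = d * d := by
    rw [finrank_euclideanSpace]; simp
  omega



-- unitarity of members
lemma coe_mul_star (U : Matrix.unitaryGroup (Fin d) ℂ) :
    (U : Matrix (Fin d) (Fin d) ℂ) * (U : Matrix (Fin d) (Fin d) ℂ)ᴴ = 1 := by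
  have := U.2.2
  rwa [Matrix.star_eq_conjTranspose] at this

lemma coe_star_mul (U : Matrix.unitaryGroup (Fin d) ℂ) :
    (U : Matrix (Fin d) (Fin d) ℂ)ᴴ * (U : Matrix (Fin d) (Fin d) ℂ) = 1 := by
  have := U.2.1
  rwa [Matrix.star_eq_conjTranspose] at this

lemma coe_inv_eq (U : Matrix.unitaryGroup (Fin d) ℂ) :
    ((U⁻¹ : Matrix.unitaryGroup (Fin d) ℂ) : Matrix (Fin d) (Fin d) ℂ)
      = (U : Matrix (Fin d) (Fin d) ℂ)ᴴ := by
  rw [← Unitary.star_eq_inv, Unitary.coe_star, Matrix.star_eq_conjTranspose]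

theorem step1 (hd : 2 ≤ d) (G : Subgroup (Matrix.unitaryGroup (Fin d) ℂ))
    (h2 : ∀ W : Submodule ℂ (V2 d), W ≤ (ℂ ∙ phi0 d)ᗮ →
      (∀ U ∈ G, ∀ w ∈ W,
        WithLp.toLp 2 ((tensM ((U : Matrix.unitaryGroup (Fin d) ℂ) : Matrix (Fin d) (Fin d) ℂ)
          (mconj ((U : Matrix.unitaryGroup (Fin d) ℂ) : Matrix (Fin d) (Fin d) ℂ))).mulVec w)
          ∈ W) →
      W = ⊥ ∨ W = (ℂ ∙ phi0 d)ᗮ)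
    (A : Op2 d)
    (hcomm : ∀ U ∈ G, rho ((U : Matrix.unitaryGroup (Fin d) ℂ) : Matrix (Fin d) (Fin d) ℂ) * A
      = A * rho ((U : Matrix.unitaryGroup (Fin d) ℂ) : Matrix (Fin d) (Fin d) ℂ)) :
    (1 - outer (phi0 d)) * A * outer (phi0 d) = 0 := by
  have hd0 : 0 < d := lt_of_lt_of_le two_pos hd
  set u : V2 d :=
    (WithLp.toLp 2 (((1 - outer (phi0 d)) * A) *ᵥ (phi0 d : (Fin d × Fin d) → ℂ)) : V2 d) with hu
  have humem : (u : V2 d) ∈ (ℂ ∙ phi0 d)ᗮ := by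
    rw [hu, ← Matrix.mulVec_mulVec]
    exact Q_mulVec_mem_orthophi hd0 _
  have hfix : ∀ U ∈ G,
      rho ((U : Matrix.unitaryGroup (Fin d) ℂ) : Matrix (Fin d) (Fin d) ℂ) *ᵥ u = u := by
    intro U hU
    set V := ((U : Matrix.unitaryGroup (Fin d) ℂ) : Matrix (Fin d) (Fin d) ℂ)
    have hmat : rho V * ((1 - outer (phi0 d)) * A) = ((1 - outer (phi0 d)) * A) * rho V := by
      have e1 : rho V * (1 - outer (phi0 d)) = (1 - outer (phi0 d)) * rho V := by
        rw [Matrix.mul_sub, Matrix.sub_mul, Matrix.mul_one, Matrix.one_mul,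
          rho_mul_P (coe_mul_star _), P_mul_rho (coe_star_mul _)]
      calc rho V * ((1 - outer (phi0 d)) * A)
          = (rho V * (1 - outer (phi0 d))) * A := by rw [Matrix.mul_assoc]
        _ = ((1 - outer (phi0 d)) * rho V) * A := by rw [e1]
        _ = (1 - outer (phi0 d)) * (A * rho V) := by rw [Matrix.mul_assoc, hcomm U hU]
        _ = ((1 - outer (phi0 d)) * A) * rho V := by rw [Matrix.mul_assoc]
    rw [hu, Matrix.mulVec_mulVec, hmat, ← Matrix.mulVec_mulVec,
      rho_mulVec_phi0 (coe_mul_star _)]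
  set W : Submodule ℂ (V2 d) := ℂ ∙ (u : V2 d) with hWdef
  have hWle : W ≤ (ℂ ∙ phi0 d)ᗮ := (Submodule.span_singleton_le_iff_mem _ _).mpr humem
  have hWinv : ∀ U ∈ G, ∀ w ∈ W,
      WithLp.toLp 2 ((tensM ((U : Matrix.unitaryGroup (Fin d) ℂ) : Matrix (Fin d) (Fin d) ℂ)
        (mconj ((U : Matrix.unitaryGroup (Fin d) ℂ) : Matrix (Fin d) (Fin d) ℂ))).mulVec w)
        ∈ W := by
    intro U hU w hw
    rw [hWdef, Submodule.mem_span_singleton] at hw ⊢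
    obtain ⟨c, rfl⟩ := hw
    refine ⟨c, ?_⟩
    show c • u = WithLp.toLp 2 ((rho ((U : Matrix.unitaryGroup (Fin d) ℂ) : Matrix (Fin d) (Fin d) ℂ)) *ᵥ
      (c • (u : (Fin d × Fin d) → ℂ)))
    rw [Matrix.mulVec_smul, hfix U hU, WithLp.toLp_smul, WithLp.toLp_ofLp]
  have hu0 : u = 0 := by
    rcases h2 W hWle hWinv with hbot | htop
    · have : (u : V2 d) ∈ W := Submodule.mem_span_singleton_self _
      rwa [hbot, Submodule.mem_bot] at this
    · by_cases h0 : (u : V2 d) = 0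
      · exact h0
      · exfalso
        have hfr := finrank_orthophi (d := d) hd0
        rw [← htop, hWdef] at hfr
        have h1 : Module.finrank ℂ (ℂ ∙ (u : V2 d)) = 1 := finrank_span_singleton h0
        rw [h1] at hfr
        have h4 : 4 ≤ d * d := Nat.mul_le_mul hd hd
        omega
  ext p q
  rw [Matrix.mul_apply, Matrix.zero_apply]
  calc ∑ r, ((1 - outer (phi0 d)) * A) p r * outer (phi0 d) r q
      = (∑ r, ((1 - outer (phi0 d)) * A) p r * phi0 d r) * starRingEnd ℂ (phi0 d q) := by
        rw [Finset.sum_mul]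
        exact Finset.sum_congr rfl fun r _ => by rw [outer]; simp only [Matrix.of_apply]; ring
    _ = u p * starRingEnd ℂ (phi0 d q) := rfl
    _ = 0 := by rw [hu0]; simp


theorem hcomm_conjT (G : Subgroup (Matrix.unitaryGroup (Fin d) ℂ)) (A : Op2 d)
    (hcomm : ∀ U ∈ G, rho ((U : Matrix.unitaryGroup (Fin d) ℂ) : Matrix (Fin d) (Fin d) ℂ) * A
      = A * rho ((U : Matrix.unitaryGroup (Fin d) ℂ) : Matrix (Fin d) (Fin d) ℂ)) :
    ∀ U ∈ G, rho ((U : Matrix.unitaryGroup (Fin d) ℂ) : Matrix (Fin d) (Fin d) ℂ) * Aᴴ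
      = Aᴴ * rho ((U : Matrix.unitaryGroup (Fin d) ℂ) : Matrix (Fin d) (Fin d) ℂ) := by
  intro U hU
  have h := hcomm U⁻¹ (inv_mem hU)
  rw [coe_inv_eq] at h
  have h2 := congrArg Matrix.conjTranspose h
  rw [Matrix.conjTranspose_mul, Matrix.conjTranspose_mul, rho_conjTranspose,
    Matrix.conjTranspose_conjTranspose] at h2
  exact h2.symm

theorem vecMul_starphi_eq_zero (hd0 : 0 < d) (M : Op2 d)
    (h : outer (phi0 d) * M = 0) :
    (star (phi0 d) ᵥ* M : (Fin d × Fin d) → ℂ) = 0 := by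
  funext q
  have h0 := congrFun (congrFun h ((⟨0, hd0⟩ : Fin d), (⟨0, hd0⟩ : Fin d))) q
  rw [Matrix.mul_apply] at h0
  have hs : (((Real.sqrt d : ℂ))⁻¹) ≠ 0 := by
    rw [ne_eq, inv_eq_zero, Complex.ofReal_eq_zero]
    exact Real.sqrt_ne_zero'.mpr (by exact_mod_cast hd0)
  have key : ∑ r, outer (phi0 d) ((⟨0, hd0⟩ : Fin d), (⟨0, hd0⟩ : Fin d)) r * M r q
      = ((Real.sqrt d : ℂ))⁻¹ * ∑ r, (star (phi0 d) : (Fin d × Fin d) → ℂ) r * M r q := by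
    rw [Finset.mul_sum]
    refine Finset.sum_congr rfl fun r _ => ?_
    rw [outer]
    simp only [Matrix.of_apply, Pi.star_apply, RCLike.star_def]
    have h9 : phi0 d ((⟨0, hd0⟩ : Fin d), (⟨0, hd0⟩ : Fin d)) = ((Real.sqrt d : ℂ))⁻¹ := rfl
    rw [h9]; ring
  rw [key] at h0
  rcases mul_eq_zero.mp h0 with h' | h'
  · exact absurd h' hs
  · exact h'

theorem commutant (hd : 2 ≤ d) (G : Subgroup (Matrix.unitaryGroup (Fin d) ℂ))
    (h2 : ∀ W : Submodule ℂ (V2 d), W ≤ (ℂ ∙ phi0 d)ᗮ →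
      (∀ U ∈ G, ∀ w ∈ W,
        WithLp.toLp 2 ((tensM ((U : Matrix.unitaryGroup (Fin d) ℂ) : Matrix (Fin d) (Fin d) ℂ)
          (mconj ((U : Matrix.unitaryGroup (Fin d) ℂ) : Matrix (Fin d) (Fin d) ℂ))).mulVec w)
          ∈ W) →
      W = ⊥ ∨ W = (ℂ ∙ phi0 d)ᗮ)
    (A : Op2 d)
    (hcomm : ∀ U ∈ G, rho ((U : Matrix.unitaryGroup (Fin d) ℂ) : Matrix (Fin d) (Fin d) ℂ) * A
      = A * rho ((U : Matrix.unitaryGroup (Fin d) ℂ) : Matrix (Fin d) (Fin d) ℂ)) :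
    ∃ α β : ℂ, A = α • outer (phi0 d) + β • (1 - outer (phi0 d)) := by
  have hd0 : 0 < d := lt_of_lt_of_le two_pos hd
  have hQAP := step1 hd G h2 A hcomm
  have hPAQ : outer (phi0 d) * (A * (1 - outer (phi0 d))) = 0 := by
    have h := step1 hd G h2 Aᴴ (hcomm_conjT G A hcomm)
    have h3 := congrArg Matrix.conjTranspose h
    rw [Matrix.conjTranspose_mul, Matrix.conjTranspose_mul, Matrix.conjTranspose_conjTranspose,
      Matrix.conjTranspose_sub, Matrix.conjTranspose_one, P_conjTranspose,
      Matrix.conjTranspose_zero] at h3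
    exact h3
  -- A preserves the orthocomplement
  have hpres : ∀ w : V2 d, w ∈ (ℂ ∙ phi0 d)ᗮ →
      (WithLp.toLp 2 (A *ᵥ (w : (Fin d × Fin d) → ℂ) : (Fin d × Fin d) → ℂ) : V2 d) ∈ (ℂ ∙ phi0 d)ᗮ := by
    intro w hw
    rw [mem_orthophi_iff] at hw ⊢
    have hQw : (1 - outer (phi0 d)) *ᵥ (w : (Fin d × Fin d) → ℂ) = w := by
      rw [Matrix.sub_mulVec, Matrix.one_mulVec, P_mulVec, hw, zero_smul, sub_zero]
    have hz := vecMul_starphi_eq_zero hd0 (A * (1 - outer (phi0 d))) hPAQ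
    calc star (phi0 d) ⬝ᵥ (A *ᵥ (w : (Fin d × Fin d) → ℂ))
        = star (phi0 d) ⬝ᵥ ((A * (1 - outer (phi0 d))) *ᵥ (w : (Fin d × Fin d) → ℂ)) := by
          rw [← Matrix.mulVec_mulVec, hQw]
      _ = (star (phi0 d) ᵥ* (A * (1 - outer (phi0 d)))) ⬝ᵥ (w : (Fin d × Fin d) → ℂ) := by
          rw [dotProduct_mulVec]
      _ = 0 := by rw [hz, zero_dotProduct]
  -- eigenvalue of A on the orthocomplement
  haveI hnontriv : Nontrivial ((ℂ ∙ phi0 d)ᗮ : Submodule ℂ (V2 d)) := by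
    rw [Submodule.nontrivial_iff_ne_bot]
    intro hb
    have hfr := finrank_orthophi (d := d) hd0
    rw [hb, finrank_bot] at hfr
    have h4 : 4 ≤ d * d := Nat.mul_le_mul hd hd
    omega
  let f : ((ℂ ∙ phi0 d)ᗮ : Submodule ℂ (V2 d)) →ₗ[ℂ] ((ℂ ∙ phi0 d)ᗮ : Submodule ℂ (V2 d)) :=
    { toFun := fun w => ⟨(WithLp.toLp 2 (A *ᵥ (w : (Fin d × Fin d) → ℂ) : (Fin d × Fin d) → ℂ) : V2 d),
        hpres _ w.2⟩
      map_add' := by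
        intro x y; apply Subtype.ext
        show WithLp.toLp 2 (A *ᵥ ((x : (Fin d × Fin d) → ℂ) + (y : (Fin d × Fin d) → ℂ))) = _
        rw [Matrix.mulVec_add]; rfl
      map_smul' := by
        intro c x; apply Subtype.ext
        show WithLp.toLp 2 (A *ᵥ (c • (x : (Fin d × Fin d) → ℂ))) = _
        rw [Matrix.mulVec_smul]; rfl }
  obtain ⟨c, hc⟩ := Module.End.exists_eigenvalue f
  obtain ⟨v, hv⟩ := hc.exists_hasEigenvector
  have hvA : A *ᵥ ((v : V2 d) : (Fin d × Fin d) → ℂ) = c • ((v : V2 d) : (Fin d × Fin d) → ℂ) := by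
    have h5 := congrArg (Subtype.val) hv.apply_eq_smul
    exact congrArg WithLp.ofLp h5
  -- the eigenspace within the orthocomplement
  let mEnd : Module.End ℂ (V2 d) :=
    { toFun := fun x => (WithLp.toLp 2 (A *ᵥ (x : (Fin d × Fin d) → ℂ) : (Fin d × Fin d) → ℂ) : V2 d)
      map_add' := fun x y => congrArg (WithLp.toLp 2) (Matrix.mulVec_add A x y)
      map_smul' := fun r x => congrArg (WithLp.toLp 2) (Matrix.mulVec_smul A r x) }
  set W : Submodule ℂ (V2 d) := (ℂ ∙ phi0 d)ᗮ ⊓ Module.End.eigenspace mEnd c with hWdef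
  have hmemW : ∀ x : V2 d, x ∈ W ↔ x ∈ (ℂ ∙ phi0 d)ᗮ ∧
      A *ᵥ (x : (Fin d × Fin d) → ℂ) = c • (x : (Fin d × Fin d) → ℂ) := by
    intro x
    rw [hWdef, Submodule.mem_inf, Module.End.mem_eigenspace_iff]
    exact ⟨fun h => ⟨h.1, congrArg WithLp.ofLp h.2⟩, fun h => ⟨h.1, congrArg (WithLp.toLp 2) h.2⟩⟩
  have hWle : W ≤ (ℂ ∙ phi0 d)ᗮ := inf_le_left
  have hWinv : ∀ U ∈ G, ∀ w ∈ W,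
      WithLp.toLp 2 ((tensM ((U : Matrix.unitaryGroup (Fin d) ℂ) : Matrix (Fin d) (Fin d) ℂ)
        (mconj ((U : Matrix.unitaryGroup (Fin d) ℂ) : Matrix (Fin d) (Fin d) ℂ))).mulVec w)
        ∈ W := by
    intro U hU w hw
    rw [hmemW] at hw ⊢
    refine ⟨rho_mulVec_mem_orthophi (coe_star_mul _) hw.1, ?_⟩
    set V := ((U : Matrix.unitaryGroup (Fin d) ℂ) : Matrix (Fin d) (Fin d) ℂ)
    calc A *ᵥ (rho V *ᵥ (w : (Fin d × Fin d) → ℂ))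
        = (A * rho V) *ᵥ (w : (Fin d × Fin d) → ℂ) := Matrix.mulVec_mulVec ..
      _ = (rho V * A) *ᵥ (w : (Fin d × Fin d) → ℂ) := by rw [hcomm U hU]
      _ = rho V *ᵥ (A *ᵥ (w : (Fin d × Fin d) → ℂ)) := (Matrix.mulVec_mulVec ..).symm
      _ = rho V *ᵥ (c • (w : (Fin d × Fin d) → ℂ)) := by rw [hw.2]
      _ = c • (rho V *ᵥ (w : (Fin d × Fin d) → ℂ)) := Matrix.mulVec_smul ..
  have hWQ : W = (ℂ ∙ phi0 d)ᗮ := by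
    rcases h2 W hWle hWinv with hbot | htop
    · exfalso
      have : (v : V2 d) ∈ W := by
        rw [hmemW]
        exact ⟨v.2, hvA⟩
      rw [hbot, Submodule.mem_bot] at this
      exact hv.right (Subtype.ext this)
    · exact htop
  have heig : ∀ w : V2 d, w ∈ (ℂ ∙ phi0 d)ᗮ →
      A *ᵥ (w : (Fin d × Fin d) → ℂ) = c • (w : (Fin d × Fin d) → ℂ) := by
    intro w hw
    rw [← hWQ, hmemW] at hw
    exact hw.2
  -- A φ⁰ = α φ⁰
  set α : ℂ := star (phi0 d) ⬝ᵥ (A *ᵥ (phi0 d : (Fin d × Fin d) → ℂ)) with hα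
  have hAphi : A *ᵥ (phi0 d : (Fin d × Fin d) → ℂ) = α • (phi0 d : (Fin d × Fin d) → ℂ) := by
    have h6 : ((1 - outer (phi0 d)) * A * outer (phi0 d)) *ᵥ (phi0 d : (Fin d × Fin d) → ℂ)
        = 0 := by rw [hQAP, Matrix.zero_mulVec]
    rw [← Matrix.mulVec_mulVec, ← Matrix.mulVec_mulVec, P_mulVec, starphi_dot_phi hd0,
      one_smul, Matrix.sub_mulVec, Matrix.one_mulVec, P_mulVec, sub_eq_zero] at h6
    exact h6
  refine ⟨α, c, ?_⟩
  ext p q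
  have hx : ∀ x : (Fin d × Fin d) → ℂ, A *ᵥ x
      = (α • outer (phi0 d) + c • (1 - outer (phi0 d))) *ᵥ x := by
    intro x
    have hsplit : x = (outer (phi0 d)) *ᵥ x + (1 - outer (phi0 d)) *ᵥ x := by
      rw [Matrix.sub_mulVec, Matrix.one_mulVec]; abel
    calc A *ᵥ x = A *ᵥ ((outer (phi0 d)) *ᵥ x + (1 - outer (phi0 d)) *ᵥ x) := by rw [← hsplit]
      _ = A *ᵥ ((outer (phi0 d)) *ᵥ x) + A *ᵥ ((1 - outer (phi0 d)) *ᵥ x) := by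
          rw [Matrix.mulVec_add]
      _ = (α • outer (phi0 d) + c • (1 - outer (phi0 d))) *ᵥ x := by
          rw [P_mulVec, Matrix.mulVec_smul, hAphi,
            heig _ (Q_mulVec_mem_orthophi hd0 x), Matrix.add_mulVec,
            Matrix.smul_mulVec, Matrix.smul_mulVec, P_mulVec, smul_comm]
  have h7 := congrFun (hx (Pi.single q 1)) p
  simpa using h7


lemma rho_conjT_mul_P {U : Matrix (Fin d) (Fin d) ℂ} (hU : Uᴴ * U = 1) :
    (rho U)ᴴ * outer (phi0 d) = outer (phi0 d) := by
  have h := congrArg Matrix.conjTranspose (P_mul_rho (d := d) hU)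
  rwa [Matrix.conjTranspose_mul, P_conjTranspose] at h

lemma dsq_sub_one_ne (hd : 2 ≤ d) : ((d : ℂ)) ^ 2 - 1 ≠ 0 := by
  rw [sub_ne_zero]
  intro h
  have h2 : ((d ^ 2 : ℕ) : ℂ) = ((1 : ℕ) : ℂ) := by push_cast; rw [← h]
  have h3 : d ^ 2 = 1 := Nat.cast_injective h2
  nlinarith

lemma commEA_term (Vm Um : Matrix (Fin d) (Fin d) ℂ) (hV2 : Vmᴴ * Vm = 1) (A : Op2 d) :
    rho Vm * (rho Um * A * (rho Um)ᴴ)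
      = rho (Vm * Um) * A * (rho (Vm * Um))ᴴ * rho Vm := by
  rw [← rho_mul, Matrix.conjTranspose_mul]
  calc rho Vm * (rho Um * A * (rho Um)ᴴ)
      = rho Vm * (rho Um * A * (rho Um)ᴴ) * ((rho Vm)ᴴ * rho Vm) := by
        rw [rho_conjTranspose_mul_self hV2, Matrix.mul_one]
    _ = rho Vm * rho Um * A * ((rho Um)ᴴ * (rho Vm)ᴴ) * rho Vm := by
        simp only [Matrix.mul_assoc]

lemma conj_term (Um : Matrix (Fin d) (Fin d) ℂ) (hU2 : Umᴴ * Um = 1) (A : Op2 d) :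
    (outer (phi0 d) * (rho Um * A * (rho Um)ᴴ)).trace = (outer (phi0 d) * A).trace := by
  calc (outer (phi0 d) * (rho Um * A * (rho Um)ᴴ)).trace
      = ((outer (phi0 d) * rho Um) * A * (rho Um)ᴴ).trace := by
        simp only [Matrix.mul_assoc]
    _ = (outer (phi0 d) * A * (rho Um)ᴴ).trace := by rw [P_mul_rho hU2]
    _ = ((rho Um)ᴴ * (outer (phi0 d) * A)).trace := by
        rw [Matrix.trace_mul_comm]
    _ = (((rho Um)ᴴ * outer (phi0 d)) * A).trace := by rw [Matrix.mul_assoc]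
    _ = (outer (phi0 d) * A).trace := by rw [rho_conjT_mul_P hU2]

lemma trace_term (Um : Matrix (Fin d) (Fin d) ℂ) (hU2 : Umᴴ * Um = 1) (A : Op2 d) :
    (rho Um * A * (rho Um)ᴴ).trace = A.trace := by
  rw [Matrix.trace_mul_comm, ← Matrix.mul_assoc,
    rho_conjTranspose_mul_self hU2, Matrix.one_mul]

theorem avg (hd : 2 ≤ d) (G : Subgroup (Matrix.unitaryGroup (Fin d) ℂ)) [Fintype G]
    (h2 : ∀ W : Submodule ℂ (V2 d), W ≤ (ℂ ∙ phi0 d)ᗮ →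
      (∀ U ∈ G, ∀ w ∈ W,
        WithLp.toLp 2 ((tensM ((U : Matrix.unitaryGroup (Fin d) ℂ) : Matrix (Fin d) (Fin d) ℂ)
          (mconj ((U : Matrix.unitaryGroup (Fin d) ℂ) : Matrix (Fin d) (Fin d) ℂ))).mulVec w)
          ∈ W) →
      W = ⊥ ∨ W = (ℂ ∙ phi0 d)ᗮ)
    (A : Op2 d) :
    ((Fintype.card G : ℂ))⁻¹ •
        ∑ U : G, rho ((U : Matrix.unitaryGroup (Fin d) ℂ) : Matrix (Fin d) (Fin d) ℂ) * A *
          (rho ((U : Matrix.unitaryGroup (Fin d) ℂ) : Matrix (Fin d) (Fin d) ℂ))ᴴ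
      = (outer (phi0 d) * A).trace • outer (phi0 d)
        + ((A.trace - (outer (phi0 d) * A).trace) / ((d : ℂ) ^ 2 - 1)) •
            (1 - outer (phi0 d)) := by
  have hd0 : 0 < d := lt_of_lt_of_le two_pos hd
  have hcard : (Fintype.card G : ℂ) ≠ 0 :=
    Nat.cast_ne_zero.mpr Fintype.card_ne_zero
  set EA : Op2 d := ((Fintype.card G : ℂ))⁻¹ •
      ∑ U : G, rho ((U : Matrix.unitaryGroup (Fin d) ℂ) : Matrix (Fin d) (Fin d) ℂ) * A *
        (rho ((U : Matrix.unitaryGroup (Fin d) ℂ) : Matrix (Fin d) (Fin d) ℂ))ᴴ with hEA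
  have hcommEA : ∀ V ∈ G,
      rho ((V : Matrix.unitaryGroup (Fin d) ℂ) : Matrix (Fin d) (Fin d) ℂ) * EA
        = EA * rho ((V : Matrix.unitaryGroup (Fin d) ℂ) : Matrix (Fin d) (Fin d) ℂ) := by
    intro V hV
    rw [hEA, Matrix.mul_smul, Matrix.smul_mul]
    congr 1
    rw [Finset.mul_sum, Finset.sum_mul]
    refine Fintype.sum_equiv (Equiv.mulLeft (⟨V, hV⟩ : G)) _ _ ?_
    intro U
    rw [Equiv.coe_mulLeft]
    have hcoe : (((((⟨V, hV⟩ : G) * U : G) : Matrix.unitaryGroup (Fin d) ℂ)) :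
        Matrix (Fin d) (Fin d) ℂ)
      = ((V : Matrix.unitaryGroup (Fin d) ℂ) : Matrix (Fin d) (Fin d) ℂ) *
        ((U : Matrix.unitaryGroup (Fin d) ℂ) : Matrix (Fin d) (Fin d) ℂ) := rfl
    rw [hcoe, commEA_term _ _ (coe_star_mul V) A]
  obtain ⟨α, β, hAB⟩ := commutant hd G h2 EA hcommEA
  have hPQ : outer (phi0 d) * (1 - outer (phi0 d)) = 0 := by
    rw [Matrix.mul_sub, Matrix.mul_one, P_mul_P hd0, sub_self]
  -- trace of P * EA, way 1
  have way1 : (outer (phi0 d) * EA).trace = α := by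
    rw [hAB, Matrix.mul_add, Matrix.mul_smul, Matrix.mul_smul, P_mul_P hd0, hPQ,
      Matrix.trace_add, Matrix.trace_smul, Matrix.trace_smul, trace_P hd0]
    simp
  -- trace of P * EA, way 2
  have way2 : (outer (phi0 d) * EA).trace = (outer (phi0 d) * A).trace := by
    rw [hEA, Matrix.mul_smul, Matrix.trace_smul, Finset.mul_sum, Matrix.trace_sum]
    have hterm : ∀ U : G,
        (outer (phi0 d) *
          (rho ((U : Matrix.unitaryGroup (Fin d) ℂ) : Matrix (Fin d) (Fin d) ℂ) * A *
            (rho ((U : Matrix.unitaryGroup (Fin d) ℂ) : Matrix (Fin d) (Fin d) ℂ))ᴴ)).trace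
          = (outer (phi0 d) * A).trace := by
      intro U
      exact conj_term _ (coe_star_mul _) A
    simp only [hterm, Finset.sum_const, Finset.card_univ, nsmul_eq_mul, smul_eq_mul]
    rw [← mul_assoc, inv_mul_cancel₀ hcard, one_mul]
  -- trace of EA
  have way3 : EA.trace = A.trace := by
    rw [hEA, Matrix.trace_smul, Matrix.trace_sum]
    have hterm : ∀ U : G,
        ((rho ((U : Matrix.unitaryGroup (Fin d) ℂ) : Matrix (Fin d) (Fin d) ℂ) * A *
            (rho ((U : Matrix.unitaryGroup (Fin d) ℂ) : Matrix (Fin d) (Fin d) ℂ))ᴴ)).trace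
          = A.trace := by
      intro U
      exact trace_term _ (coe_star_mul _) A
    simp only [hterm, Finset.sum_const, Finset.card_univ, nsmul_eq_mul, smul_eq_mul]
    rw [← mul_assoc, inv_mul_cancel₀ hcard, one_mul]
  have htraceQ : (1 - outer (phi0 d) : Op2 d).trace = (d : ℂ) ^ 2 - 1 := by
    rw [Matrix.trace_sub, Matrix.trace_one, trace_P hd0]
    congr 1
    simp [Fintype.card_prod]
    push_cast
    ring
  have way4 : EA.trace = α + β * ((d : ℂ) ^ 2 - 1) := by
    rw [hAB, Matrix.trace_add, Matrix.trace_smul, Matrix.trace_smul, trace_P hd0, htraceQ]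
    simp
  have hα : α = (outer (phi0 d) * A).trace := by rw [← way1, way2]
  have hβ : β = (A.trace - (outer (phi0 d) * A).trace) / ((d : ℂ) ^ 2 - 1) := by
    have h5 : A.trace = α + β * ((d : ℂ) ^ 2 - 1) := by rw [← way3, way4]
    rw [hα] at h5
    field_simp [dsq_sub_one_ne hd]
    linear_combination -h5
  rw [hAB, hα, hβ]




lemma trace_stdBasis (m n : Fin d × Fin d) :
    (Matrix.single m n (1 : ℂ)).trace = (1 : Op2 d) m n := by
  rw [Matrix.trace, Matrix.one_apply]
  simp only [Matrix.diag_apply, Matrix.single, Matrix.of_apply]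
  by_cases h : m = n
  · subst h; simp
  · rw [if_neg h]
    refine Finset.sum_eq_zero fun x _ => ?_
    rw [if_neg]
    rintro ⟨rfl, rfl⟩
    exact h rfl

lemma trace_P_stdBasis (m n : Fin d × Fin d) :
    (outer (phi0 d) * Matrix.single m n (1 : ℂ)).trace = outer (phi0 d) m n := by
  rw [Matrix.trace]
  simp only [Matrix.diag_apply, Matrix.mul_apply, Matrix.single, Matrix.of_apply,
    mul_ite, mul_one, mul_zero]
  have inner : ∀ x, (∑ a, if m = a ∧ n = x then outer (phi0 d) x a else 0)
      = if n = x then outer (phi0 d) x m else 0 := by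
    intro x
    by_cases hnx : n = x <;> simp [hnx]
  simp only [inner]
  rw [Finset.sum_ite_eq, if_pos (Finset.mem_univ n)]
  exact P_symm n m

lemma entry_rho_E_rho (Um : Matrix (Fin d) (Fin d) ℂ) (m n x y : Fin d × Fin d) :
    (rho Um * Matrix.single m n (1 : ℂ) * (rho Um)ᴴ) x y
      = rho Um x m * starRingEnd ℂ (rho Um y n) := by
  have h1 : ∀ b, (rho Um * Matrix.single m n (1 : ℂ)) x b
      = if n = b then rho Um x m else 0 := by
    intro b
    rw [Matrix.mul_apply]
    simp only [Matrix.single, Matrix.of_apply, mul_ite, mul_one, mul_zero]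
    by_cases hb : n = b <;> simp [hb]
  rw [Matrix.mul_apply]
  simp only [h1, ite_mul, zero_mul]
  rw [Finset.sum_ite_eq, if_pos (Finset.mem_univ n), Matrix.conjTranspose_apply]
  rfl

/-- the permutation of indices swapping factors 2 and 3. -/
def sigma4 (p : I4 d) : I4 d := (p.1, p.2.2.1, p.2.1, p.2.2.2)

lemma sigma4_sigma4 (p : I4 d) : sigma4 (sigma4 p) = p := rfl

lemma swap23_apply (p q : I4 d) :
    swap23 d p q = if q = sigma4 p then 1 else 0 := by
  rw [swap23]
  simp only [Matrix.of_apply]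
  refine if_congr ?_ rfl rfl
  obtain ⟨p1, p2, p3, p4⟩ := p
  obtain ⟨q1, q2, q3, q4⟩ := q
  simp only [sigma4, Prod.ext_iff]
  constructor
  · rintro ⟨h1, h2, h3, h4⟩; exact ⟨h1.symm, h3.symm, h2.symm, h4.symm⟩
  · rintro ⟨h1, h2, h3, h4⟩; exact ⟨h1.symm, h3.symm, h2.symm, h4.symm⟩

lemma swap23_apply' (q r : I4 d) :
    swap23 d q r = if q = sigma4 r then 1 else 0 := by
  rw [swap23_apply]
  refine if_congr ?_ rfl rfl
  constructor
  · rintro rfl; rfl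
  · rintro rfl; rfl

lemma S_mul_apply (M : Op4 d) (p r : I4 d) :
    (swap23 d * M) p r = M (sigma4 p) r := by
  rw [Matrix.mul_apply]
  simp only [swap23_apply, ite_mul, one_mul, zero_mul]
  rw [Finset.sum_ite_eq', if_pos (Finset.mem_univ _)]

lemma mul_S_apply (M : Op4 d) (p r : I4 d) :
    (M * swap23 d) p r = M p (sigma4 r) := by
  rw [Matrix.mul_apply]
  simp only [swap23_apply', mul_ite, mul_one, mul_zero]
  rw [Finset.sum_ite_eq', if_pos (Finset.mem_univ _)]

lemma S_mul_S : swap23 d * swap23 d = 1 := by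
  ext p r
  rw [S_mul_apply, swap23_apply, sigma4_sigma4, Matrix.one_apply]
  exact if_congr eq_comm rfl rfl

lemma swap23_inv : (swap23 d)⁻¹ = swap23 d := Matrix.inv_eq_left_inv S_mul_S

lemma wU_eq (hd0 : 0 < d) (Um : Matrix (Fin d) (Fin d) ℂ) (p : I4 d) :
    wU Um p = (d : ℂ)⁻¹ * rho Um (p.1, p.2.2.1) (p.2.1, p.2.2.2) := by
  rw [wU, rho, tensM, mconj]
  simp only [Matrix.of_apply, Matrix.map_apply]
  rw [← sqrtinv_mul_self hd0]
  ring


end Aux14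

open Aux14

/-- Under irreducibility of `G` on `ℂ^d` and of the orthocomplement of `φ⁰`
under `U ⊗ Ū`, the test `T(M_f)` equals
`S (|φ⁰⟩⟨φ⁰| ⊗ |φ⁰⟩⟨φ⁰| + (1/(d²-1))(I - |φ⁰⟩⟨φ⁰|) ⊗ (I - |φ⁰⟩⟨φ⁰|)) S⁻¹`. -/
theorem stmt14 (d : ℕ) (hd : 2 ≤ d) (G : Subgroup (Matrix.unitaryGroup (Fin d) ℂ))
    [Fintype G]
    (h1 : ∀ W : Submodule ℂ (V d),
      (∀ U ∈ G, ∀ w ∈ W,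
        WithLp.toLp 2 (((U : Matrix.unitaryGroup (Fin d) ℂ) : Matrix (Fin d) (Fin d) ℂ).mulVec w) ∈ W) →
      W = ⊥ ∨ W = ⊤)
    (h2 : ∀ W : Submodule ℂ (V2 d), W ≤ (ℂ ∙ phi0 d)ᗮ →
      (∀ U ∈ G, ∀ w ∈ W,
        WithLp.toLp 2 ((tensM ((U : Matrix.unitaryGroup (Fin d) ℂ) : Matrix (Fin d) (Fin d) ℂ)
          (mconj ((U : Matrix.unitaryGroup (Fin d) ℂ) : Matrix (Fin d) (Fin d) ℂ))).mulVec w)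
          ∈ W) →
      W = ⊥ ∨ W = (ℂ ∙ phi0 d)ᗮ) :
    TMf d G =
      swap23 d *
        (tens22 (outer (phi0 d)) (outer (phi0 d)) +
          (1 / ((d : ℂ) ^ 2 - 1)) • tens22 (1 - outer (phi0 d)) (1 - outer (phi0 d))) *
        (swap23 d)⁻¹ := by
  have hd0 : 0 < d := lt_of_lt_of_le two_pos hd
  have hdC : (d : ℂ) ≠ 0 := Nat.cast_ne_zero.mpr hd0.ne'
  have hcard : (Fintype.card G : ℂ) ≠ 0 := Nat.cast_ne_zero.mpr Fintype.card_ne_zero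
  rw [swap23_inv]
  ext p r
  rw [mul_S_apply, S_mul_apply]
  -- the key averaged identity, at entry ((p.1,p.2.2.1),(r.1,r.2.2.1))
  have hkey := congrFun (congrFun (avg hd G h2
      (Matrix.single (p.2.1, p.2.2.2) (r.2.1, r.2.2.2) (1 : ℂ)))
    (p.1, p.2.2.1)) (r.1, r.2.2.1)
  rw [Matrix.smul_apply, Matrix.sum_apply] at hkey
  simp only [entry_rho_E_rho] at hkey
  rw [Matrix.add_apply, Matrix.smul_apply, Matrix.smul_apply, trace_P_stdBasis,
    trace_stdBasis, smul_eq_mul, smul_eq_mul, smul_eq_mul] at hkey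
  -- expand the left-hand side
  rw [TMf, Matrix.smul_apply, Matrix.sum_apply]
  have hterm : ∀ U : G,
      outer4 (wU ((U : Matrix.unitaryGroup (Fin d) ℂ) : Matrix (Fin d) (Fin d) ℂ)) p r
        = (d : ℂ)⁻¹ * (d : ℂ)⁻¹ *
          (rho ((U : Matrix.unitaryGroup (Fin d) ℂ) : Matrix (Fin d) (Fin d) ℂ)
              (p.1, p.2.2.1) (p.2.1, p.2.2.2) *
            starRingEnd ℂ
              (rho ((U : Matrix.unitaryGroup (Fin d) ℂ) : Matrix (Fin d) (Fin d) ℂ)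
                (r.1, r.2.2.1) (r.2.1, r.2.2.2))) := by
    intro U
    rw [outer4]
    simp only [Matrix.of_apply]
    rw [wU_eq hd0, wU_eq hd0]
    simp only [_root_.map_mul, map_inv₀, Complex.conj_natCast]
    ring
  simp only [hterm]
  rw [← Finset.mul_sum, smul_eq_mul]
  -- expand the right-hand side entries
  rw [Matrix.add_apply, Matrix.smul_apply, smul_eq_mul, tens22, tens22]
  simp only [Matrix.of_apply, sigma4]
  -- substitute the sum using hkey
  have hsum : (∑ U : G,
      rho ((U : Matrix.unitaryGroup (Fin d) ℂ) : Matrix (Fin d) (Fin d) ℂ)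
          (p.1, p.2.2.1) (p.2.1, p.2.2.2) *
        starRingEnd ℂ
          (rho ((U : Matrix.unitaryGroup (Fin d) ℂ) : Matrix (Fin d) (Fin d) ℂ)
            (r.1, r.2.2.1) (r.2.1, r.2.2.2)))
      = (Fintype.card G : ℂ) *
        (outer (phi0 d) (p.2.1, p.2.2.2) (r.2.1, r.2.2.2) *
            outer (phi0 d) (p.1, p.2.2.1) (r.1, r.2.2.1)
          + (((1 : Op2 d) (p.2.1, p.2.2.2) (r.2.1, r.2.2.2) -
              outer (phi0 d) (p.2.1, p.2.2.2) (r.2.1, r.2.2.2)) / ((d : ℂ) ^ 2 - 1)) *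
            (1 - outer (phi0 d)) (p.1, p.2.2.1) (r.1, r.2.2.1)) := by
    rw [← hkey, ← mul_assoc, mul_inv_cancel₀ hcard, one_mul]
  rw [hsum]
  simp only [Matrix.sub_apply]
  have hD := dsq_sub_one_ne hd
  field_simp
end
end
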